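/- Let α < β be real numbers with α·β ≠ 0 and α + β = 1, and let k = β - α, so 0 < k < 1 requires α > 0. Suppose g : (0, +∞) → (α, β) is differentiable, strictly increasing, and satisfies g'(s)/(g(s) - α) - g'(s)/(g(s) - β) = (β - α)/s for all s > 0, with lim_{s→0⁺} g(s) = α and lim_{s→+∞} g(s) = β. Then there exists a constant a > 0 such that g(s) = (1/2)(k + 1) - k·a/(s^k + a) for all s > 0. -/

import Mathlib

theorem stmt_15 (α β : ℝ) (hαβ : α < β) (hne : α * β ≠ 0)
    (hsum : α + β = 1) (hα : 0 < α) (g : ℝ → ℝ)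
    (hdiff : ∀ s, 0 < s → DifferentiableAt ℝ g s)
    (hrange : ∀ s, 0 < s → g s ∈ Set.Ioo α β)
    (hmono : StrictMonoOn g (Set.Ioi 0))
    (hode : ∀ s, 0 < s →
      deriv g s / (g s - α) - deriv g s / (g s - β) = (β - α) / s)
    (hlim0 : Filter.Tendsto g (nhdsWithin 0 (Set.Ioi 0)) (nhds α))
    (hlimtop : Filter.Tendsto g Filter.atTop (nhds β)) :
    ∃ a : ℝ, 0 < a ∧ ∀ s, 0 < s →
      g s = (1/2) * ((β - α) + 1) - (β - α) * a / (s ^ (β - α) + a) := by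
  have hk : 0 < β - α := sub_pos.2 hαβ
  set h : ℝ → ℝ := fun s => Real.log (g s - α) - Real.log (β - g s)
      - (β - α) * Real.log s with hh
  have hderiv : ∀ s ∈ Set.Ioi (0:ℝ), HasDerivAt h 0 s := by
    intro s hs
    have hs0 : (0:ℝ) < s := hs
    obtain ⟨h1, h2⟩ := hrange s hs0
    have hg1 : (0:ℝ) < g s - α := sub_pos.2 h1
    have hg2 : (0:ℝ) < β - g s := sub_pos.2 h2
    have hgd : HasDerivAt g (deriv g s) s := (hdiff s hs0).hasDerivAt
    have d1 : HasDerivAt (fun t => Real.log (g t - α)) (deriv g s / (g s - α)) s := by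
      have := (hgd.sub_const α).log hg1.ne'
      simpa using this
    have d2 : HasDerivAt (fun t => Real.log (β - g t)) (-(deriv g s) / (β - g s)) s := by
      have := (hgd.const_sub β).log hg2.ne'
      simpa using this
    have d3 : HasDerivAt (fun t => (β - α) * Real.log t) ((β - α) * (1 / s)) s := by
      simpa [one_div] using (Real.hasDerivAt_log hs0.ne').const_mul (β - α)
    have := (d1.sub d2).sub d3
    convert this using 1
    case e'_4 => rfl
    case e'_5 => rfl
    case e'_8 => rfl
    have hode' := hode s hs0
    rw [show g s - β = -(β - g s) by ring, div_neg, ← neg_div] at hode'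
    rw [mul_one_div]
    linarith
  have hconst : ∀ s ∈ Set.Ioi (0:ℝ), h s = h 1 := by
    intro s hs
    refine (convex_Ioi (0:ℝ)).is_const_of_fderivWithin_eq_zero
      (fun x hx => ((hderiv x hx).differentiableAt).differentiableWithinAt)
      (fun x hx => ?_) hs (by norm_num)
    rw [fderivWithin_of_isOpen isOpen_Ioi hx, (hderiv x hx).hasFDerivAt.fderiv]
    ext y
    simp

  set c : ℝ := h 1 with hc
  refine ⟨Real.exp (-c), Real.exp_pos _, fun s hs0 => ?_⟩
  set a : ℝ := Real.exp (-c)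
  obtain ⟨h1, h2⟩ := hrange s hs0
  have hg1 : (0:ℝ) < g s - α := sub_pos.2 h1
  have hg2 : (0:ℝ) < β - g s := sub_pos.2 h2
  have key : g s - α = Real.exp c * s ^ (β - α) * (β - g s) := by
    have hlog : Real.log (g s - α)
        = c + (β - α) * Real.log s + Real.log (β - g s) := by
      have := hconst s hs0
      simp only [hh] at this
      linarith
    have := congrArg Real.exp hlog
    rw [Real.exp_log hg1, Real.exp_add, Real.exp_add, Real.exp_log hg2] at this
    rw [Real.rpow_def_of_pos hs0, mul_comm (Real.log s)]
    exact this
  have hexp : Real.exp c * a = 1 := by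
    rw [← Real.exp_add]; simp
  have hspow : 0 < s ^ (β - α) := Real.rpow_pos_of_pos hs0 _
  have hsa : (0:ℝ) < s ^ (β - α) + a := by positivity
  have key2 : s ^ (β - α) * (β - g s) = a * (g s - α) := by
    linear_combination (-a) * key - (s ^ (β - α) * (β - g s)) * hexp
  have hβ : (1/2 : ℝ) * ((β - α) + 1) = β := by linarith
  rw [hβ]
  field_simp
  linear_combination (-1 : ℝ) * key2
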